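/- Let 0 < a < 1, 0 < ε < 1, h_n = (a+εn²)/2, ω_n = √(h_n² − n²) for n > 1/ε. Then for all t ≥ 0, ∑_{n > 1/ε} e^{-h_n t} sinh(ω_n t)/(n² ω_n) ≤ ζ(2) · t · e^{-t/(2ε)}. -/
import Mathlib

open Real

lemma sinh_le_mul_exp {x : ℝ} (hx : 0 ≤ x) : Real.sinh x ≤ x * Real.exp x := by
  rw [Real.sinh_eq]
  have h1 : (-(2 * x)) + 1 ≤ Real.exp (-(2 * x)) := Real.add_one_le_exp _
  have h2 : Real.exp (-x) = Real.exp x * Real.exp (-(2*x)) := by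
    rw [← Real.exp_add]; ring_nf
  have h3 : (0:ℝ) < Real.exp x := Real.exp_pos x
  nlinarith [Real.exp_pos (-(2*x))]

lemma term_bound (a ε x t : ℝ) (ha : 0 < a) (ha1 : a < 1)
    (hε : 0 < ε) (hε1 : ε < 1) (hx : 1 / ε < x) (ht : 0 ≤ t) :
    Real.exp (-((a + ε * x ^ 2) / 2) * t) *
      Real.sinh (Real.sqrt (((a + ε * x ^ 2) / 2) ^ 2 - x ^ 2) * t) /
      (x ^ 2 * Real.sqrt (((a + ε * x ^ 2) / 2) ^ 2 - x ^ 2))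
    ≤ t * Real.exp (-t / (2 * ε)) / x ^ 2 := by
  have hεx : 1 < ε * x := by
    rw [div_lt_iff₀ hε] at hx; linarith [hx]
  have hx1 : 1 < x := by nlinarith
  have hx0 : 0 < x := by linarith
  set h := (a + ε * x ^ 2) / 2 with hh
  have hεx2 : x < ε * x ^ 2 := by nlinarith
  have hhpos : 0 < h := by positivity
  have hRHS : 0 ≤ t * Real.exp (-t / (2 * ε)) / x ^ 2 := by positivity
  rcases le_or_gt (h ^ 2 - x ^ 2) 0 with hD | hD
  · rw [Real.sqrt_eq_zero_of_nonpos hD]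
    simp [hRHS]
  · set ω := Real.sqrt (h ^ 2 - x ^ 2) with hω
    have hωpos : 0 < ω := Real.sqrt_pos.mpr hD
    have hωsq : ω ^ 2 = h ^ 2 - x ^ 2 := Real.sq_sqrt hD.le
    -- key: h - ω ≥ 1/(2ε)
    have hc : 0 ≤ h - 1 / (2 * ε) := by
      have h2ε : 1 / (2 * ε) ≤ x / 2 := by
        rw [div_le_div_iff₀ (by positivity) (by norm_num : (0:ℝ) < 2)]
        nlinarith
      rw [hh]; nlinarith
    have hsq' : h ^ 2 - x ^ 2 ≤ (h - 1 / (2 * ε)) ^ 2 := by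
      have hε' : ε ≠ 0 := ne_of_gt hε
      have keyeq : (h - 1/(2*ε))^2 - (h^2 - x^2)
          = (1 - 2*ε*a + 2*ε^2*x^2)/(4*ε^2) := by
        rw [hh]; field_simp; ring
      have hnum : 0 ≤ 1 - 2*ε*a + 2*ε^2*x^2 := by
        nlinarith [sq_nonneg (ε*x - 1), mul_pos hε ha]
      have : 0 ≤ (h - 1/(2*ε))^2 - (h^2 - x^2) := by
        rw [keyeq]; positivity
      linarith
    have hkey : ω ≤ h - 1 / (2 * ε) := by
      calc ω ≤ Real.sqrt ((h - 1 / (2 * ε)) ^ 2) := Real.sqrt_le_sqrt (by linarith [hωsq, hsq'])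
        _ = h - 1 / (2 * ε) := Real.sqrt_sq hc
    -- sinh bound
    have hsinh : Real.sinh (ω * t) ≤ ω * t * Real.exp (ω * t) :=
      sinh_le_mul_exp (by positivity)
    have hnum : Real.exp (-h * t) * Real.sinh (ω * t) ≤ ω * (t * Real.exp (-t / (2 * ε))) := by
      have h1 : Real.exp (-h * t) * Real.sinh (ω * t) ≤
          Real.exp (-h * t) * (ω * t * Real.exp (ω * t)) := by
        apply mul_le_mul_of_nonneg_left hsinh (Real.exp_pos _).le
      have h2 : Real.exp (-h * t) * (ω * t * Real.exp (ω * t)) =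
          ω * t * Real.exp ((ω - h) * t) := by
        rw [show (ω - h) * t = -h * t + ω * t by ring, Real.exp_add]; ring
      have h3 : Real.exp ((ω - h) * t) ≤ Real.exp (-t / (2 * ε)) := by
        apply Real.exp_le_exp.mpr
        have : ω - h ≤ -(1 / (2 * ε)) := by linarith
        calc (ω - h) * t ≤ -(1 / (2 * ε)) * t :=
              mul_le_mul_of_nonneg_right this ht
          _ = -t / (2 * ε) := by ring
      calc Real.exp (-h * t) * Real.sinh (ω * t)
          ≤ ω * t * Real.exp ((ω - h) * t) := by rw [← h2]; exact h1
        _ ≤ ω * t * Real.exp (-t / (2 * ε)) := by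
            apply mul_le_mul_of_nonneg_left h3 (by positivity)
        _ = ω * (t * Real.exp (-t / (2 * ε))) := by ring
    rw [div_le_div_iff₀ (by positivity) (by positivity)]
    calc Real.exp (-h * t) * Real.sinh (ω * t) * x ^ 2
        ≤ ω * (t * Real.exp (-t / (2 * ε))) * x ^ 2 :=
          mul_le_mul_of_nonneg_right hnum (by positivity)
      _ = t * Real.exp (-t / (2 * ε)) * (x ^ 2 * ω) := by ring

theorem tail_sum_sinh_bound (a ε : ℝ) (ha : 0 < a) (ha1 : a < 1)
    (hε : 0 < ε) (hε1 : ε < 1) (t : ℝ) (ht : 0 ≤ t) :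
    (∑' n : ℕ, if (1 : ℝ) / ε < n then
        Real.exp (-((a + ε * n ^ 2) / 2) * t) *
          Real.sinh (Real.sqrt (((a + ε * n ^ 2) / 2) ^ 2 - (n : ℝ) ^ 2) * t) /
          ((n : ℝ) ^ 2 * Real.sqrt (((a + ε * n ^ 2) / 2) ^ 2 - (n : ℝ) ^ 2))
      else 0) ≤ (Real.pi ^ 2 / 6) * t * Real.exp (-t / (2 * ε)) := by
  set c := t * Real.exp (-t / (2 * ε)) with hc
  have hcnn : 0 ≤ c := by positivity
  set f : ℕ → ℝ := fun n => if (1 : ℝ) / ε < n then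
        Real.exp (-((a + ε * n ^ 2) / 2) * t) *
          Real.sinh (Real.sqrt (((a + ε * n ^ 2) / 2) ^ 2 - (n : ℝ) ^ 2) * t) /
          ((n : ℝ) ^ 2 * Real.sqrt (((a + ε * n ^ 2) / 2) ^ 2 - (n : ℝ) ^ 2))
      else 0 with hf
  set g : ℕ → ℝ := fun n => c * (1 / (n : ℝ) ^ 2) with hg
  have hfnn : ∀ n, 0 ≤ f n := by
    intro n
    simp only [hf]
    split
    · have h1 : (0:ℝ) < (1:ℝ)/ε := by positivity
      have hn : (0:ℝ) < (n : ℝ) := lt_trans h1 (by assumption)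
      have hs : 0 ≤ Real.sqrt (((a + ε * n ^ 2) / 2) ^ 2 - (n : ℝ) ^ 2) := Real.sqrt_nonneg _
      have : 0 ≤ Real.sinh (Real.sqrt (((a + ε * n ^ 2) / 2) ^ 2 - (n : ℝ) ^ 2) * t) := by
        rw [← Real.sinh_zero]
        exact Real.sinh_le_sinh.mpr (by positivity)
      positivity
    · exact le_refl 0
  have hfg : ∀ n, f n ≤ g n := by
    intro n
    simp only [hf, hg]
    split
    · rename_i hn
      have := term_bound a ε n t ha ha1 hε hε1 hn ht
      calc _ ≤ t * Real.exp (-t / (2 * ε)) / (n:ℝ) ^ 2 := this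
        _ = c * (1 / (n:ℝ)^2) := by rw [hc]; ring
    · positivity
  have hgsum : HasSum g (c * (Real.pi ^ 2 / 6)) := hasSum_zeta_two.mul_left c
  have hfsum : Summable f := hgsum.summable.of_nonneg_of_le hfnn hfg
  calc (∑' n, f n) ≤ ∑' n, g n := Summable.tsum_le_tsum hfg hfsum hgsum.summable
    _ = c * (Real.pi ^ 2 / 6) := hgsum.tsum_eq
    _ = Real.pi ^ 2 / 6 * t * Real.exp (-t / (2 * ε)) := by rw [hc]; ring
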